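/- Let (τ_x)_{x∈S} be a family of nonnegative Lipschitz functions on a metric space C, each with Lipschitz constant at most L, such that at each point of C at most N of the τ_x are nonzero, and such that Σ_x τ_x² ≥ 1/2 everywhere. Then the functions ψ_x = τ_x / (Σ_z τ_z²)^{1/2} satisfy Σ_x ψ_x² = 1, and each ψ_x is Lipschitz with constant at most 2^{5/2} N L. -/

import Mathlib

/-- Normalizing a uniformly Lipschitz partition-like family `τ_x` with `Σ τ_x² ≥ 1/2` and
multiplicity at most `N` yields `ψ_x = τ_x / (Σ_z τ_z²)^{1/2}` with `Σ ψ_x² = 1` and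
Lipschitz constant at most `2^{5/2} N L`. -/
theorem normalized_partition {C : Type*} [MetricSpace C] {S : Type*}
    (τ : S → C → ℝ) (L : ℝ) (hL : 0 ≤ L) (N : ℕ)
    (hnonneg : ∀ x p, 0 ≤ τ x p)
    (hlip : ∀ x p q, |τ x p - τ x q| ≤ L * dist p q)
    (hmult : ∀ p : C, {x : S | τ x p ≠ 0}.Finite ∧ {x : S | τ x p ≠ 0}.encard ≤ N)
    (hsum : ∀ p : C, (1 : ℝ) / 2 ≤ ∑' x, τ x p ^ 2) :
    (∀ p : C, (∑' x, (τ x p / Real.sqrt (∑' z, τ z p ^ 2)) ^ 2) = 1) ∧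
      (∀ x : S, ∀ p q : C,
        |τ x p / Real.sqrt (∑' z, τ z p ^ 2) - τ x q / Real.sqrt (∑' z, τ z q ^ 2)| ≤
          2 ^ ((5 : ℝ) / 2) * N * L * dist p q) := by
  classical
  set F : C → Finset S := fun p => (hmult p).1.toFinset with hF
  have hzero : ∀ p x, x ∉ F p → τ x p = 0 := by
    intro p x hx
    by_contra h
    exact hx (by simp [hF, Set.Finite.mem_toFinset, h])
  have hA : ∀ p, (∑' z, τ z p ^ 2) = ∑ z ∈ F p, τ z p ^ 2 := fun p =>
    tsum_eq_sum (fun x hx => by rw [hzero p x hx]; ring)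
  have hApos : ∀ p, 0 < ∑' z, τ z p ^ 2 := fun p => lt_of_lt_of_le (by norm_num) (hsum p)
  have hsqrtpos : ∀ p, 0 < Real.sqrt (∑' z, τ z p ^ 2) := fun p => Real.sqrt_pos.2 (hApos p)
  have hsq : ∀ p, Real.sqrt (∑' z, τ z p ^ 2) ^ 2 = ∑' z, τ z p ^ 2 := fun p =>
    Real.sq_sqrt (hApos p).le
  have hcard : ∀ p, (F p).card ≤ N := by
    intro p
    have h := (hmult p).2
    rwa [(hmult p).1.encard_eq_coe_toFinset_card, Nat.cast_le] at h
  -- bound on the sum of τ over any superset of the support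
  have hsumbound : ∀ (p : C) (u : Finset S), F p ⊆ u →
      ∑ z ∈ u, τ z p ≤ Real.sqrt N * Real.sqrt (∑' z, τ z p ^ 2) := by
    intro p u hu
    have h1 : ∑ z ∈ u, τ z p = ∑ z ∈ F p, τ z p :=
      (Finset.sum_subset hu (fun x _ hx => hzero p x hx)).symm
    rw [h1]
    have h2 : (∑ z ∈ F p, τ z p) ^ 2 ≤ (N : ℝ) * (∑' z, τ z p ^ 2) := by
      rw [hA p]
      calc (∑ z ∈ F p, τ z p) ^ 2 ≤ ((F p).card : ℝ) * ∑ z ∈ F p, τ z p ^ 2 :=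
            sq_sum_le_card_mul_sum_sq (s := F p) (f := fun z => τ z p)
        _ ≤ (N : ℝ) * ∑ z ∈ F p, τ z p ^ 2 := by
            apply mul_le_mul_of_nonneg_right (by exact_mod_cast hcard p)
            positivity
    have h3 : 0 ≤ ∑ z ∈ F p, τ z p := Finset.sum_nonneg fun z _ => hnonneg z p
    calc ∑ z ∈ F p, τ z p = Real.sqrt ((∑ z ∈ F p, τ z p) ^ 2) := (Real.sqrt_sq h3).symm
      _ ≤ Real.sqrt ((N : ℝ) * (∑' z, τ z p ^ 2)) := Real.sqrt_le_sqrt h2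
      _ = Real.sqrt N * Real.sqrt (∑' z, τ z p ^ 2) := Real.sqrt_mul (by positivity) _
  constructor
  · intro p
    have : (fun x => (τ x p / Real.sqrt (∑' z, τ z p ^ 2)) ^ 2)
        = fun x => τ x p ^ 2 / (∑' z, τ z p ^ 2) := by
      funext x
      rw [div_pow, hsq p]
    rw [this, tsum_div_const, div_self (hApos p).ne']
  · intro x p q
    set A := ∑' z, τ z p ^ 2 with hAdef
    set B := ∑' z, τ z q ^ 2 with hBdef
    set sA := Real.sqrt A with hsAdef
    set sB := Real.sqrt B with hsBdef
    set a := τ x p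
    set b := τ x q
    set d := dist p q with hddef
    have hd : 0 ≤ d := dist_nonneg
    have hsApos : 0 < sA := hsqrtpos p
    have hsBpos : 0 < sB := hsqrtpos q
    have hN1 : 1 ≤ N := by
      rcases Finset.eq_empty_or_nonempty (F p) with he | hne
      · exfalso
        have h := hsum p
        rw [hA p, he, Finset.sum_empty] at h
        linarith
      · exact le_trans (Finset.card_pos.2 hne) (hcard p)
    have hsAbig : Real.sqrt 2⁻¹ ≤ sA :=
      Real.sqrt_le_sqrt (by rw [hAdef]; have := hsum p; linarith)
    have hsBbig : Real.sqrt 2⁻¹ ≤ sB :=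
      Real.sqrt_le_sqrt (by rw [hBdef]; have := hsum q; linarith)
    have h0A : (Real.sqrt 2)⁻¹ ≤ sA := by rw [← Real.sqrt_inv]; exact hsAbig
    have hinvA : sA⁻¹ ≤ Real.sqrt 2 := by
      have h := inv_anti₀ (by positivity) h0A
      rwa [inv_inv] at h
    -- |B - A| bound
    set u := F p ∪ F q with hudef
    have hBA : |B - A| ≤ L * d * (Real.sqrt N * (sA + sB)) := by
      have hBu : B = ∑ z ∈ u, τ z q ^ 2 := by
        rw [hBdef, hA q]
        exact Finset.sum_subset Finset.subset_union_right (fun z _ hz => by rw [hzero q z hz]; ring)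
      have hAu : A = ∑ z ∈ u, τ z p ^ 2 := by
        rw [hAdef, hA p]
        exact Finset.sum_subset Finset.subset_union_left (fun z _ hz => by rw [hzero p z hz]; ring)
      rw [hBu, hAu, ← Finset.sum_sub_distrib]
      calc |∑ z ∈ u, (τ z q ^ 2 - τ z p ^ 2)| ≤ ∑ z ∈ u, |τ z q ^ 2 - τ z p ^ 2| :=
            Finset.abs_sum_le_sum_abs _ _
        _ ≤ ∑ z ∈ u, L * d * (τ z q + τ z p) := by
            apply Finset.sum_le_sum
            intro z _
            have hq0 := hnonneg z q
            have hp0 := hnonneg z p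
            have h1 : τ z q ^ 2 - τ z p ^ 2 = (τ z q - τ z p) * (τ z q + τ z p) := by ring
            have h2 : |τ z q + τ z p| = τ z q + τ z p := abs_of_nonneg (by linarith)
            rw [h1, abs_mul, h2]
            apply mul_le_mul_of_nonneg_right _ (by linarith)
            rw [abs_sub_comm]
            calc |τ z p - τ z q| ≤ L * dist p q := hlip z p q
              _ = L * d := by rw [hddef]
        _ = L * d * (∑ z ∈ u, τ z q + ∑ z ∈ u, τ z p) := by
            rw [← Finset.sum_add_distrib, ← Finset.mul_sum]
        _ ≤ L * d * (Real.sqrt N * sB + Real.sqrt N * sA) := by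
            apply mul_le_mul_of_nonneg_left _ (by positivity)
            exact add_le_add (hsumbound q u Finset.subset_union_right)
              (hsumbound p u Finset.subset_union_left)
        _ = L * d * (Real.sqrt N * (sA + sB)) := by ring
    have hsdiff : |sB - sA| ≤ Real.sqrt N * (L * d) := by
      have hprod : |sB - sA| * (sA + sB) = |B - A| := by
        rw [← abs_of_pos (show (0:ℝ) < sA + sB by linarith), ← abs_mul]
        congr 1
        have h : (sB - sA) * (sA + sB) = sB ^ 2 - sA ^ 2 := by ring
        rw [h, hsBdef, hsAdef, Real.sq_sqrt (hApos p).le, Real.sq_sqrt (hApos q).le]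
      have hpos : 0 < sA + sB := by linarith
      rw [← mul_le_mul_iff_of_pos_right hpos, hprod]
      calc |B - A| ≤ L * d * (Real.sqrt N * (sA + sB)) := hBA
        _ = Real.sqrt N * (L * d) * (sA + sB) := by ring
    -- b / sB ≤ 1
    have hbB : b / sB ≤ 1 := by
      rw [div_le_one hsBpos]
      have h1 : b ^ 2 ≤ B := by
        rw [hBdef, hA q]
        by_cases hx : x ∈ F q
        · exact Finset.single_le_sum (fun z _ => sq_nonneg (τ z q)) hx
        · have hb0 : b = 0 := hzero q x hx
          rw [hb0]
          simpa using Finset.sum_nonneg fun z _ => sq_nonneg (τ z q)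
      calc b = Real.sqrt (b ^ 2) := (Real.sqrt_sq (hnonneg x q)).symm
        _ ≤ sB := Real.sqrt_le_sqrt h1
    -- decomposition
    have hdecomp : a / sA - b / sB = (a - b) / sA + (b / sB) * ((sB - sA) / sA) := by
      field_simp
      ring
    rw [hdecomp]
    have h1 : |(a - b) / sA| ≤ L * d * Real.sqrt 2 := by
      rw [abs_div, abs_of_pos hsApos, div_eq_mul_inv]
      apply mul_le_mul (hlip x p q) hinvA (by positivity) (by positivity)
    have h2 : |(b / sB) * ((sB - sA) / sA)| ≤ Real.sqrt N * (L * d) * Real.sqrt 2 := by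
      have e1 : |b / sB * ((sB - sA) / sA)| = (b / sB) * (|sB - sA| / sA) := by
        rw [abs_mul, abs_div (sB - sA) sA, abs_of_pos hsApos,
          abs_of_nonneg (div_nonneg (hnonneg x q) hsBpos.le)]
      rw [e1]
      calc (b / sB) * (|sB - sA| / sA) ≤ 1 * (|sB - sA| / sA) :=
            mul_le_mul_of_nonneg_right hbB (by positivity)
        _ = |sB - sA| * sA⁻¹ := by rw [one_mul, div_eq_mul_inv]
        _ ≤ Real.sqrt N * (L * d) * Real.sqrt 2 :=
            mul_le_mul hsdiff hinvA (by positivity) (by positivity)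
    have hNR : (1:ℝ) ≤ N := by exact_mod_cast hN1
    have hNs : Real.sqrt N ≤ (N : ℝ) := by
      have h := Real.sqrt_le_sqrt (show (N:ℝ) ≤ (N:ℝ)^2 by nlinarith)
      rwa [Real.sqrt_sq (by positivity)] at h
    have hrpow : (2:ℝ) ^ ((5 : ℝ) / 2) = 4 * Real.sqrt 2 := by
      have e : (2:ℝ) ^ ((5:ℝ)/2) = (2:ℝ) ^ (2:ℝ) * (2:ℝ) ^ ((1:ℝ)/2) := by
        rw [← Real.rpow_add (by norm_num)]; norm_num
      rw [e, Real.rpow_two, Real.sqrt_eq_rpow]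
      norm_num
    have hfin : L * d * Real.sqrt 2 + Real.sqrt N * (L * d) * Real.sqrt 2
        ≤ 2 ^ ((5 : ℝ) / 2) * N * L * d := by
      rw [hrpow]
      have key : (1:ℝ) + Real.sqrt N ≤ 4 * N := by nlinarith [Real.sqrt_nonneg (N:ℝ)]
      calc L * d * Real.sqrt 2 + Real.sqrt N * (L * d) * Real.sqrt 2
          = (1 + Real.sqrt N) * (L * d * Real.sqrt 2) := by ring
        _ ≤ (4 * N) * (L * d * Real.sqrt 2) := mul_le_mul_of_nonneg_right key (by positivity)
        _ = 4 * Real.sqrt 2 * N * L * d := by ring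
    calc |(a - b) / sA + (b / sB) * ((sB - sA) / sA)|
        ≤ |(a - b) / sA| + |(b / sB) * ((sB - sA) / sA)| := abs_add_le _ _
      _ ≤ L * d * Real.sqrt 2 + Real.sqrt N * (L * d) * Real.sqrt 2 := add_le_add h1 h2
      _ ≤ 2 ^ ((5 : ℝ) / 2) * N * L * d := hfin
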